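/- Let G be a connected bipartite simple graph on n vertices with bipartition classes of sizes r and n − r and with m edges. Then the largest distance eigenvalue satisfies λ₁(D(G)) ≥ 2(n² + (r−1)n − r² − 2m)/n. -/

import Mathlib

open Finset SimpleGraph
open Matrix

/-- The distance matrix of a simple graph on `Fin n`, as a real matrix: the
`(i,j)` entry is the graph distance `d_G(i,j)`. -/
noncomputable def distMatrix {n : ℕ} (G : SimpleGraph (Fin n)) :
    Matrix (Fin n) (Fin n) ℝ :=
  fun i j => (G.dist i j : ℝ)

/-- The eigenvalues of the distance matrix, listed in decreasing order. -/
noncomputable def distEigList {n : ℕ} (G : SimpleGraph (Fin n)) : List ℝ :=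
  if h : (distMatrix G).IsHermitian then
    (List.ofFn h.eigenvalues).insertionSort (· ≥ ·)
  else []

/-- `distEig G k` is the `k`-th largest distance eigenvalue `λ_k(D(G))` (`1`-indexed). -/
noncomputable def distEig {n : ℕ} (G : SimpleGraph (Fin n)) (k : ℕ) : ℝ :=
  (distEigList G).getD (k - 1) 0

/-- `S_k(D(G))`, the sum of the `k` largest distance eigenvalues. -/
noncomputable def distEigSum {n : ℕ} (G : SimpleGraph (Fin n)) (k : ℕ) : ℝ :=
  ((distEigList G).take k).sum

/-- `G` has independence number at most `s`: every set of pairwise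
nonadjacent vertices has at most `s` elements. -/
def IndepNumLE {V : Type*} (G : SimpleGraph V) (s : ℕ) : Prop :=
  ∀ S : Finset V, (∀ u ∈ S, ∀ v ∈ S, u ≠ v → ¬ G.Adj u v) → S.card ≤ s

lemma quad_le_max {n : ℕ} (A : Matrix (Fin n) (Fin n) ℝ) (hA : A.IsHermitian) (c : ℝ)
    (hc : ∀ i, hA.eigenvalues i ≤ c) (x : Fin n → ℝ) :
    x ⬝ᵥ (A *ᵥ x) ≤ c * (x ⬝ᵥ x) := by
  set U : Matrix (Fin n) (Fin n) ℝ := (hA.eigenvectorUnitary : Matrix (Fin n) (Fin n) ℝ) with hU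
  set y : Fin n → ℝ := star U *ᵥ x with hy
  have hyv : y = x ᵥ* U := by
    rw [hy, Matrix.star_eq_conjTranspose, Matrix.conjTranspose_eq_transpose_of_trivial,
      Matrix.mulVec_transpose]
  have hUU : U * star U = 1 := Matrix.mem_unitaryGroup_iff.mp hA.eigenvectorUnitary.2
  have h1 : x ⬝ᵥ (A *ᵥ x) = ∑ i, hA.eigenvalues i * (y i)^2 := by
    conv_lhs => rw [hA.spectral_theorem, Unitary.conjStarAlgAut_apply]
    rw [← Matrix.mulVec_mulVec, ← Matrix.mulVec_mulVec, Matrix.dotProduct_mulVec, ← hyv,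
      ← hy]
    rw [dotProduct]
    congr 1; ext i
    rw [Matrix.mulVec_diagonal]
    simp [RCLike.ofReal]; ring
  have h2 : x ⬝ᵥ x = ∑ i, (y i)^2 := by
    have hys : y ᵥ* star U = x := by
      rw [hyv, Matrix.vecMul_vecMul, hUU, Matrix.vecMul_one]
    have : y ⬝ᵥ y = x ⬝ᵥ x := by
      conv_lhs => rw [show y ⬝ᵥ y = y ⬝ᵥ (star U *ᵥ x) from rfl, Matrix.dotProduct_mulVec, hys]
    rw [← this, dotProduct]; congr 1; ext i; ring
  rw [h1, h2, Finset.mul_sum]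
  exact Finset.sum_le_sum fun i _ => mul_le_mul_of_nonneg_right (hc i) (sq_nonneg _)

lemma sorted_getD_ge {l : List ℝ} (hs : l.Pairwise (· ≥ ·)) {a : ℝ} (ha : a ∈ l) :
    a ≤ l.getD 0 0 := by
  cases l with
  | nil => simp at ha
  | cons b t =>
    rcases List.mem_cons.mp ha with h | h
    · simp [h]
    · simpa using (List.pairwise_cons.mp hs).1 a h

lemma walk_parity {n : ℕ} {G : SimpleGraph (Fin n)} (V₁ : Finset (Fin n))
    (hbip : ∀ u v, G.Adj u v → (u ∈ V₁ ↔ v ∉ V₁)) {u v : Fin n} (p : G.Walk u v) :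
    ((u ∈ V₁ ↔ v ∈ V₁) ↔ Even p.length) := by
  induction p with
  | nil => simp
  | @cons a b c h q ih =>
    have hab := hbip a b h
    simp only [SimpleGraph.Walk.length_cons, Nat.even_add_one, ← ih]
    tauto

theorem largest_distance_eigenvalue_bipartite_lower_bound {n r : ℕ}
    (G : SimpleGraph (Fin n)) [DecidableRel G.Adj] (hG : G.Connected)
    (V₁ : Finset (Fin n)) (hr : V₁.card = r)
    (hbip : ∀ u v, G.Adj u v → (u ∈ V₁ ↔ v ∉ V₁)) :
    distEig G 1 ≥
      2 * ((n : ℝ) ^ 2 + ((r : ℝ) - 1) * n - (r : ℝ) ^ 2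
        - 2 * (G.edgeFinset.card : ℝ)) / n := by
  classical
  have hA : (distMatrix G).IsHermitian := by
    ext i j
    simp [distMatrix, Matrix.conjTranspose_apply, SimpleGraph.dist_comm]
  have hn : 0 < n := by
    have : Nonempty (Fin n) := hG.nonempty
    exact Fin.pos_iff_nonempty.mpr this
  have hnR : 0 < (n : ℝ) := by exact_mod_cast hn
  set Λ := distEig G 1 with hΛ
  have hc : ∀ i, hA.eigenvalues i ≤ Λ := by
    intro i
    have hmem : hA.eigenvalues i ∈ distEigList G := by
      rw [distEigList, dif_pos hA]
      exact (List.Perm.mem_iff (List.perm_insertionSort _ _)).mpr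
        (List.mem_ofFn.mpr ⟨i, rfl⟩)
    have hsorted : (distEigList G).Pairwise (· ≥ ·) := by
      rw [distEigList, dif_pos hA]
      exact List.pairwise_insertionSort _ _
    simpa [hΛ, distEig] using sorted_getD_ge hsorted hmem
  have key := quad_le_max (distMatrix G) hA Λ hc (fun _ => 1)
  have hq : ∑ i, ∑ j, distMatrix G i j ≤ Λ * n := by
    have h1 : (fun _ => (1:ℝ)) ⬝ᵥ (distMatrix G *ᵥ (fun _ => (1:ℝ)))
        = ∑ i, ∑ j, distMatrix G i j := by
      simp [dotProduct, Matrix.mulVec]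
    have h2 : ((fun _ => (1:ℝ)) : Fin n → ℝ) ⬝ᵥ ((fun _ => (1:ℝ)) : Fin n → ℝ) = (n : ℝ) := by
      simp [dotProduct]
    rw [h1, h2] at key
    exact key
  -- combinatorial lower bound
  set m : ℝ := (G.edgeFinset.card : ℝ) with hm
  set a : Fin n → ℝ := fun i => if i ∈ V₁ then 1 else 0 with ha
  set adjI : Fin n → Fin n → ℝ := fun i j => if G.Adj i j then 1 else 0 with hadjI
  have hpt : ∀ i j, 3 - 2 * adjI i j - (a i * a j + (1 - a i) * (1 - a j))
      - (if i = j then (2:ℝ) else 0) ≤ distMatrix G i j := by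
    intro i j
    by_cases hij : i = j
    · subst hij
      by_cases hi : i ∈ V₁ <;>
        simp [distMatrix, adjI, a, hi, SimpleGraph.dist_self, G.irrefl] <;> norm_num
    · by_cases hadj : G.Adj i j
      · have hd : G.dist i j = 1 := SimpleGraph.dist_eq_one_iff_adj.mpr hadj
        have hside := hbip i j hadj
        by_cases hi : i ∈ V₁
        · have hj : j ∉ V₁ := hside.mp hi
          norm_num [distMatrix, hd, adjI, hadj, a, hi, hj, hij]
        · have hj : j ∈ V₁ := by by_contra hj; exact hi (hside.mpr hj)
          norm_num [distMatrix, hd, adjI, hadj, a, hi, hj, hij]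
      · have hdpos : 0 < G.dist i j := hG.pos_dist_of_ne hij
        have hd1 : G.dist i j ≠ 1 := fun h => hadj (SimpleGraph.dist_eq_one_iff_adj.mp h)
        by_cases hsame : (i ∈ V₁ ↔ j ∈ V₁)
        · have h2 : (2 : ℕ) ≤ G.dist i j := by omega
          have h2R : (2 : ℝ) ≤ distMatrix G i j := by
            simp only [distMatrix]; exact_mod_cast h2
          by_cases hi : i ∈ V₁
          · have hj : j ∈ V₁ := hsame.mp hi
            simp only [adjI, hadj, if_false, a, hi, hj, if_true, if_neg hij]
            linarith
          · have hj : j ∉ V₁ := fun hj => hi (hsame.mpr hj)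
            simp only [adjI, hadj, if_false, a, hi, hj, if_true, if_neg hij]
            linarith
        · obtain ⟨p, hp⟩ := hG.exists_walk_length_eq_dist i j
          have hpar := walk_parity V₁ hbip p
          rw [hp] at hpar
          have hodd : ¬ Even (G.dist i j) := fun he => hsame (hpar.mpr he)
          rw [Nat.not_even_iff_odd] at hodd
          obtain ⟨k, hk⟩ := hodd
          have h3 : (3 : ℕ) ≤ G.dist i j := by omega
          have h3R : (3 : ℝ) ≤ distMatrix G i j := by
            simp only [distMatrix]; exact_mod_cast h3
          have hi : i ∈ V₁ ↔ ¬ (j ∈ V₁) := by tauto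
          by_cases hiv : i ∈ V₁
          · have hj : j ∉ V₁ := hi.mp hiv
            simp only [adjI, hadj, if_false, a, hiv, hj, if_true, if_neg hij]
            linarith
          · have hj : j ∈ V₁ := by tauto
            simp only [adjI, hadj, if_false, a, hiv, hj, if_true, if_neg hij]
            linarith
  have hsum : ∑ i, ∑ j, (3 - 2 * adjI i j - (a i * a j + (1 - a i) * (1 - a j))
      - (if i = j then (2:ℝ) else 0)) ≤ ∑ i, ∑ j, distMatrix G i j :=
    Finset.sum_le_sum fun i _ => Finset.sum_le_sum fun j _ => hpt i j
  have har : ∑ i, a i = (r : ℝ) := by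
    rw [ha]
    rw [Finset.sum_ite_mem, Finset.univ_inter, Finset.sum_const, hr]
    simp
  have hna : ∑ i, (1 - a i) = (n : ℝ) - r := by
    rw [Finset.sum_sub_distrib, har, Finset.sum_const, Finset.card_univ]
    simp
  have hadjsum : ∑ i, ∑ j, adjI i j = 2 * m := by
    have hdeg : ∀ i, ∑ j, adjI i j = (G.degree i : ℝ) := by
      intro i
      rw [SimpleGraph.degree, neighborFinset_eq_filter]
      rw [Finset.card_filter]
      push_cast
      simp [adjI]
    calc ∑ i, ∑ j, adjI i j = ∑ i, (G.degree i : ℝ) := Finset.sum_congr rfl fun i _ => hdeg i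
      _ = ((∑ i, G.degree i : ℕ) : ℝ) := by push_cast; rfl
      _ = 2 * m := by rw [G.sum_degrees_eq_twice_card_edges]; push_cast; ring
  have hL : ∑ i, ∑ j, (3 - 2 * adjI i j - (a i * a j + (1 - a i) * (1 - a j))
      - (if i = j then (2:ℝ) else 0))
      = 3 * (n:ℝ) * n - 2 * (2 * m) - ((r:ℝ) * r + ((n:ℝ) - r) * ((n:ℝ) - r)) - 2 * n := by
    have hterm : ∀ i j, (3 - 2 * adjI i j - (a i * a j + (1 - a i) * (1 - a j))
        - (if i = j then (2:ℝ) else 0))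
        = 3 - 2 * adjI i j - a i * a j - (1 - a i) * (1 - a j)
          - (if i = j then (2:ℝ) else 0) := fun i j => by ring
    simp_rw [hterm, Finset.sum_sub_distrib]
    rw [show (∑ _i : Fin n, ∑ _j : Fin n, (3:ℝ)) = 3 * n * n by
      simp [Finset.sum_const, Finset.card_univ]; ring]
    rw [show (∑ i, ∑ j, 2 * adjI i j) = 2 * (2 * m) by
      simp_rw [← Finset.mul_sum]; rw [hadjsum]]
    rw [show (∑ i, ∑ j, a i * a j) = (r:ℝ) * r by
      rw [← Finset.sum_mul_sum]; rw [har]]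
    rw [show (∑ i, ∑ j, (1 - a i) * (1 - a j)) = ((n:ℝ) - r) * ((n:ℝ) - r) by
      rw [← Finset.sum_mul_sum]; rw [hna]]
    rw [show (∑ _i : Fin n, ∑ j : Fin n, (if _i = j then (2:ℝ) else 0)) = 2 * n by
      simp [Finset.sum_ite_eq, Finset.card_univ]; ring]
    ring
  rw [hL] at hsum
  rw [ge_iff_le, div_le_iff₀ hnR]
  calc 2 * ((n : ℝ) ^ 2 + ((r : ℝ) - 1) * n - (r : ℝ) ^ 2 - 2 * m)
      = 3 * (n:ℝ) * n - 2 * (2 * m) - ((r:ℝ) * r + ((n:ℝ) - r) * ((n:ℝ) - r)) - 2 * n := by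
        ring
    _ ≤ ∑ i, ∑ j, distMatrix G i j := hsum
    _ ≤ Λ * n := hq
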